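/- Let A ⋊_c B be a cocycle semidirect product where the action α of B on A is trivial (a central-type extension with 2-cocycle c : B × B → A). If Q is any subgroup of A ⋊_c B, then there exists a subgroup B₀ ≤ B such that Q is isomorphic to a cocycle semidirect product (Q ∩ A) ⋊_{α', c'} B₀ where (α', c') is a cocycle action cohomologous to c restricted to B₀. -/
import Mathlib


/-- A cocycle action of a group `B` on a group `A`: maps `α : B → Aut(A)` and
`c : B × B → A` satisfying `α_g α_h = Ad(c(g,h)) α_{gh}`, the 2-cocycle identity
`c(g,h)c(gh,k) = α_g(c(h,k)) c(g,hk)` and the normalization `c(g,1) = c(1,g) = 1`. -/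
structure CocycleAction (B A : Type*) [Group B] [Group A] where
  α : B → A ≃* A
  c : B → B → A
  comp : ∀ g h a, α g (α h a) = c g h * α (g * h) a * (c g h)⁻¹
  cocycle : ∀ g h k, c g h * c (g * h) k = α g (c h k) * c g (h * k)
  c_one_left : ∀ g, c 1 g = 1
  c_one_right : ∀ g, c g 1 = 1

variable {B A : Type*} [Group B] [Group A]

/-- The cocycle semidirect product `A ⋊_{α,c} B`: the set `A × B` with the
multiplication `(x,g)·(y,h) = (x α_g(y) c(g,h), gh)`. -/
@[ext]
structure CSP (ca : CocycleAction B A) where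
  a : A
  b : B

namespace CSP

variable {ca : CocycleAction B A}

instance : Mul (CSP ca) := ⟨fun p q => ⟨p.a * ca.α p.b q.a * ca.c p.b q.b, p.b * q.b⟩⟩
instance : One (CSP ca) := ⟨⟨1, 1⟩⟩
instance : Inv (CSP ca) :=
  ⟨fun p => ⟨(ca.c p.b⁻¹ p.b)⁻¹ * (ca.α p.b⁻¹ p.a)⁻¹, p.b⁻¹⟩⟩

lemma mul_def (p q : CSP ca) :
    p * q = ⟨p.a * ca.α p.b q.a * ca.c p.b q.b, p.b * q.b⟩ := rfl
lemma one_def : (1 : CSP ca) = ⟨1, 1⟩ := rfl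
lemma inv_def (p : CSP ca) :
    p⁻¹ = ⟨(ca.c p.b⁻¹ p.b)⁻¹ * (ca.α p.b⁻¹ p.a)⁻¹, p.b⁻¹⟩ := rfl

lemma alpha_one (ca : CocycleAction B A) (x : A) : ca.α 1 x = x := by
  have h := ca.comp 1 1 x
  simp only [ca.c_one_left, one_mul, inv_one, mul_one] at h
  exact (ca.α 1).injective h

instance : Group (CSP ca) where
  mul_assoc := by
    rintro ⟨x, g⟩ ⟨y, h⟩ ⟨z, k⟩
    simp only [mul_def, CSP.mk.injEq]
    refine ⟨?_, mul_assoc g h k⟩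
    simp only [map_mul, ca.comp g h z, mul_assoc]
    rw [← ca.cocycle g h k, inv_mul_cancel_left]
  one_mul := by
    rintro ⟨y, h⟩
    simp only [one_def, mul_def, CSP.mk.injEq, one_mul, alpha_one, ca.c_one_left, mul_one]
  mul_one := by
    rintro ⟨x, g⟩
    simp only [one_def, mul_def, CSP.mk.injEq, map_one, mul_one, ca.c_one_right]
  inv_mul_cancel := by
    rintro ⟨x, g⟩
    simp only [inv_def, mul_def, one_def, CSP.mk.injEq]
    constructor
    · group
    · group

end CSP

/-- Let `A ⋊_c B` be a cocycle semidirect product where the action of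
`B` on `A` is trivial.  If `Q` is any subgroup of `A ⋊_c B`, then there exist a subgroup
`B₀ ≤ B` and a map `ξ : B → A` with `ξ 1 = 1` witnessing a cocycle action
`(α', c') = (Ad(ξ), ξ_g ξ_h c(g,h) ξ_{gh}⁻¹)` of `B₀` on `A`, cohomologous to `c`
restricted to `B₀`, with values `c'(g,h) ∈ Q ∩ A`, invariance of `Q ∩ A` under `α'`,
such that `(a, g) ↦ (a ξ_g, g)` is a multiplicative bijection from
`(Q ∩ A) ⋊_{α',c'} B₀` onto `Q`. -/
theorem stmt1 (ca : CocycleAction B A)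
    (hα : ∀ g : B, ca.α g = MulEquiv.refl A)
    (Q : Subgroup (CSP ca)) :
    ∃ (B₀ : Subgroup B) (ξ : B → A),
      ξ 1 = 1 ∧
      -- the chosen section lands in `Q`
      (∀ g ∈ B₀, (⟨ξ g, g⟩ : CSP ca) ∈ Q) ∧
      -- the cohomologous 2-cocycle `c'` takes values in `Q ∩ A`
      (∀ g ∈ B₀, ∀ h ∈ B₀,
        ξ g * ξ h * ca.c g h * (ξ (g * h))⁻¹ ∈ {x : A | (⟨x, 1⟩ : CSP ca) ∈ Q}) ∧
      -- the twisted action `α' = Ad(ξ)` preserves `Q ∩ A`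
      (∀ g ∈ B₀, ∀ x : A, (⟨x, 1⟩ : CSP ca) ∈ Q →
        (⟨ξ g * x * (ξ g)⁻¹, 1⟩ : CSP ca) ∈ Q) ∧
      -- the map `(x, g) ↦ (x ξ_g, g)` is a bijection from `(Q ∩ A) × B₀` onto `Q`
      (∀ q : CSP ca, q ∈ Q ↔
        ∃ x : A, (⟨x, 1⟩ : CSP ca) ∈ Q ∧ q.b ∈ B₀ ∧ q = ⟨x * ξ q.b, q.b⟩) ∧
      -- the bijection intertwines the multiplication of `Q` with the cocycle
      -- semidirect product multiplication of `(Q ∩ A) ⋊_{α',c'} B₀`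
      (∀ g ∈ B₀, ∀ h ∈ B₀, ∀ x y : A,
        (⟨x * ξ g, g⟩ : CSP ca) * ⟨y * ξ h, h⟩ =
          ⟨(x * (ξ g * y * (ξ g)⁻¹) * (ξ g * ξ h * ca.c g h * (ξ (g * h))⁻¹)) * ξ (g * h),
            g * h⟩) := by
  classical
  have hα' : ∀ g (x : A), ca.α g x = x := fun g x => by rw [hα g]; rfl
  -- c is central
  have hcen : ∀ g h (a : A), ca.c g h * a = a * ca.c g h := by
    intro g h a
    have h1 := ca.comp g h a
    rw [hα', hα', hα'] at h1
    have h2 : a * ca.c g h = ca.c g h * a := by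
      conv_lhs => rw [h1]
      group
    exact h2.symm
  have hsymm : ∀ g : B, ca.c g g⁻¹ = ca.c g⁻¹ g := by
    intro g
    have h1 := ca.cocycle g g⁻¹ g
    rw [hα'] at h1
    simpa [ca.c_one_left, ca.c_one_right] using h1
  -- projection homomorphism
  let π : CSP ca →* B :=
    { toFun := fun p => p.b
      map_one' := rfl
      map_mul' := fun p q => rfl }
  refine ⟨Q.map π, fun g =>
    if g = 1 then 1 else
      if hg : ∃ x : A, (⟨x, g⟩ : CSP ca) ∈ Q then hg.choose else 1, ?_, ?_, ?_, ?_, ?_, ?_⟩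
  case _ => simp
  all_goals
    set ξ : B → A := fun g =>
      if g = 1 then 1 else
        if hg : ∃ x : A, (⟨x, g⟩ : CSP ca) ∈ Q then hg.choose else 1 with hξdef
  all_goals
    have hξ1 : ξ 1 = 1 := by simp [hξdef]
  all_goals
    have hsec : ∀ g ∈ Q.map π, (⟨ξ g, g⟩ : CSP ca) ∈ Q := by
      intro g hg
      by_cases h1 : g = 1
      · subst h1
        have : (⟨ξ 1, 1⟩ : CSP ca) = 1 := by rw [hξ1]; rfl
        rw [this]; exact Q.one_mem
      · obtain ⟨p, hp, hpb⟩ := hg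
        have hex : ∃ x : A, (⟨x, g⟩ : CSP ca) ∈ Q := ⟨p.a, by
          have : (⟨p.a, g⟩ : CSP ca) = p := by cases p; cases hpb; rfl
          rwa [this]⟩
        have : ξ g = hex.choose := by simp [hξdef, h1, hex]
        rw [this]
        exact hex.choose_spec
  all_goals
    have hdiff : ∀ (g : B) (u v : A), (⟨u, g⟩ : CSP ca) ∈ Q → (⟨v, g⟩ : CSP ca) ∈ Q →
        (⟨u * v⁻¹, (1 : B)⟩ : CSP ca) ∈ Q := by
      intro g u v hu hv
      have key : (⟨u, g⟩ : CSP ca) * (⟨v, g⟩ : CSP ca)⁻¹ = ⟨u * v⁻¹, 1⟩ := by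
        rw [CSP.inv_def, CSP.mul_def]
        simp only [hα', CSP.mk.injEq]
        constructor
        · calc u * ((ca.c g⁻¹ g)⁻¹ * v⁻¹) * ca.c g g⁻¹
              = u * (ca.c g⁻¹ g)⁻¹ * (v⁻¹ * ca.c g g⁻¹) := by group
            _ = u * (ca.c g⁻¹ g)⁻¹ * (ca.c g g⁻¹ * v⁻¹) := by rw [← hcen g g⁻¹ v⁻¹]
            _ = u * v⁻¹ := by rw [← hsymm g]; group
        · group
      have := Q.mul_mem hu (Q.inv_mem hv)
      rwa [key] at this
  -- the section lands in Q
  case _ => exact hsec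
  -- c' takes values in Q ∩ A
  case _ =>
    intro g hg h hh
    have hmul : (⟨ξ g, g⟩ : CSP ca) * ⟨ξ h, h⟩ = ⟨ξ g * ξ h * ca.c g h, g * h⟩ := by
      rw [CSP.mul_def]; simp [hα']
    have h1 : (⟨ξ g * ξ h * ca.c g h, g * h⟩ : CSP ca) ∈ Q := by
      rw [← hmul]; exact Q.mul_mem (hsec g hg) (hsec h hh)
    exact hdiff (g * h) _ _ h1 (hsec (g * h) (mul_mem hg hh))
  -- α' preserves Q ∩ A
  case _ =>
    intro g hg x hx
    have hmul : (⟨ξ g, g⟩ : CSP ca) * ⟨x, 1⟩ = ⟨ξ g * x, g⟩ := by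
      rw [CSP.mul_def]; simp [hα', ca.c_one_right]
    have h1 : (⟨ξ g * x, g⟩ : CSP ca) ∈ Q := by
      rw [← hmul]; exact Q.mul_mem (hsec g hg) hx
    have := hdiff g _ _ h1 (hsec g hg)
    simpa [mul_assoc] using this
  -- bijection
  case _ =>
    intro q
    constructor
    · intro hq
      have hqb : q.b ∈ Q.map π := ⟨q, hq, rfl⟩
      have hq' : (⟨q.a, q.b⟩ : CSP ca) ∈ Q := by
        have : (⟨q.a, q.b⟩ : CSP ca) = q := by cases q; rfl
        rwa [this]
      refine ⟨q.a * (ξ q.b)⁻¹, hdiff q.b _ _ hq' (hsec q.b hqb), hqb, ?_⟩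
      cases q; simp
    · rintro ⟨x, hx, hb, hq⟩
      have hmul : (⟨x, (1:B)⟩ : CSP ca) * ⟨ξ q.b, q.b⟩ = ⟨x * ξ q.b, q.b⟩ := by
        rw [CSP.mul_def]; simp [hα', ca.c_one_left]
      rw [hq, ← hmul]; exact Q.mul_mem hx (hsec q.b hb)
  -- multiplication formula
  case _ =>
    intro g hg h hh x y
    rw [CSP.mul_def]
    simp only [hα', CSP.mk.injEq]
    refine ⟨?_, trivial⟩
    group
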